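/- The effective potential V(x,y) = -((α+2)/2)x² - (α+2)/(x²+y²)^(α/2) has exactly two critical points in the plane minus the origin, namely (α^(1/(α+2)), 0) and (-α^(1/(α+2)), 0). -/

import Mathlib

/-- The effective potential of the Hill's lunar problem with homogeneous exponent `α`. -/
noncomputable def V (α x y : ℝ) : ℝ :=
  -((α + 2) / 2) * x ^ 2 - (α + 2) / (x ^ 2 + y ^ 2) ^ (α / 2)

/-- Partial derivative of `V` in `x`. -/
noncomputable def Vx (α x y : ℝ) : ℝ := deriv (fun t => V α t y) x

/-- Partial derivative of `V` in `y`. -/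
noncomputable def Vy (α x y : ℝ) : ℝ := deriv (fun t => V α x t) y

lemma rpow_sq_aux (r α : ℝ) (hr : 0 < r) :
    ((α / 2) * r ^ (α / 2 - 1) * (2 * 1)) / (r ^ (α / 2)) ^ 2
      = α * r ^ (-(α / 2) - 1) := by
  have h1 : (r ^ (α / 2)) ^ 2 = r ^ α := by
    rw [← Real.rpow_natCast (r ^ (α / 2)) 2, ← Real.rpow_mul hr.le]
    norm_num
  have h2 : r ^ (α / 2 - 1) = r ^ (-(α / 2) - 1) * r ^ α := by
    rw [← Real.rpow_add hr]; ring_nf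
  rw [h1, h2]
  have hα : (r : ℝ) ^ α ≠ 0 := (Real.rpow_pos_of_pos hr α).ne'
  field_simp

lemma hVx (α x y : ℝ) (hr : 0 < x ^ 2 + y ^ 2) :
    HasDerivAt (fun t => V α t y)
      ((α + 2) * x * (α * (x ^ 2 + y ^ 2) ^ (-(α / 2) - 1) - 1)) x := by
  have h1 : HasDerivAt (fun t : ℝ => t ^ 2 + y ^ 2) (2 * x) x := by
    simpa using (hasDerivAt_pow 2 x).add_const (y ^ 2)
  have h2 : HasDerivAt (fun z : ℝ => z ^ (α / 2))
      ((α / 2) * (x ^ 2 + y ^ 2) ^ (α / 2 - 1)) (x ^ 2 + y ^ 2) :=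
    Real.hasDerivAt_rpow_const (Or.inl hr.ne')
  have h3 := h2.comp x h1
  have hp : (x ^ 2 + y ^ 2) ^ (α / 2) ≠ 0 := (Real.rpow_pos_of_pos hr _).ne'
  have h4 := (h3.inv hp).const_mul (α + 2)
  have h5 : HasDerivAt (fun t : ℝ => -((α + 2) / 2) * t ^ 2) (-((α + 2) / 2) * (2 * x)) x := by
    simpa using ((hasDerivAt_pow 2 x).const_mul (-((α + 2) / 2)))
  have h6 := h5.sub h4
  have heq : (fun t : ℝ => -((α + 2) / 2) * t ^ 2
      - (α + 2) * (((fun z : ℝ => z ^ (α / 2)) ∘ fun t : ℝ => t ^ 2 + y ^ 2) t)⁻¹) = fun t => V α t y := by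
    funext t
    simp [V, div_eq_mul_inv, Function.comp]
  change HasDerivAt (fun t : ℝ => -((α + 2) / 2) * t ^ 2
      - (α + 2) * (((fun z : ℝ => z ^ (α / 2)) ∘ fun t : ℝ => t ^ 2 + y ^ 2) t)⁻¹) _ x at h6
  rw [heq] at h6
  convert h6 using 1
  simp only [Function.comp_apply]
  have key := rpow_sq_aux (x ^ 2 + y ^ 2) α hr
  set r := x ^ 2 + y ^ 2
  have hmul : α / 2 * r ^ (α / 2 - 1) * (2 * x) / (r ^ (α / 2)) ^ 2
      = α * r ^ (-(α / 2) - 1) * x := by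
    have h' : α / 2 * r ^ (α / 2 - 1) * (2 * x) / (r ^ (α / 2)) ^ 2
        = (α / 2 * r ^ (α / 2 - 1) * (2 * 1) / (r ^ (α / 2)) ^ 2) * x := by ring
    rw [h', key]
  rw [neg_div, hmul]
  ring

lemma hVy (α x y : ℝ) (hr : 0 < x ^ 2 + y ^ 2) :
    HasDerivAt (fun t => V α x t)
      ((α + 2) * y * (α * (x ^ 2 + y ^ 2) ^ (-(α / 2) - 1))) y := by
  have h1 : HasDerivAt (fun t : ℝ => x ^ 2 + t ^ 2) (2 * y) y := by
    simpa using ((hasDerivAt_pow 2 y).const_add (x ^ 2))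
  have h2 : HasDerivAt (fun z : ℝ => z ^ (α / 2))
      ((α / 2) * (x ^ 2 + y ^ 2) ^ (α / 2 - 1)) (x ^ 2 + y ^ 2) :=
    Real.hasDerivAt_rpow_const (Or.inl hr.ne')
  have h3 := h2.comp y h1
  have hp : (x ^ 2 + y ^ 2) ^ (α / 2) ≠ 0 := (Real.rpow_pos_of_pos hr _).ne'
  have h4 := (h3.inv hp).const_mul (α + 2)
  have h6 := (hasDerivAt_const y (-((α + 2) / 2) * x ^ 2)).sub h4
  have heq : (fun t : ℝ => -((α + 2) / 2) * x ^ 2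
      - (α + 2) * (((fun z : ℝ => z ^ (α / 2)) ∘ fun t : ℝ => x ^ 2 + t ^ 2) t)⁻¹) = fun t => V α x t := by
    funext t
    simp [V, div_eq_mul_inv, Function.comp]
  change HasDerivAt (fun t : ℝ => -((α + 2) / 2) * x ^ 2
      - (α + 2) * (((fun z : ℝ => z ^ (α / 2)) ∘ fun t : ℝ => x ^ 2 + t ^ 2) t)⁻¹) _ y at h6
  rw [heq] at h6
  convert h6 using 1
  simp only [Function.comp_apply]
  have key := rpow_sq_aux (x ^ 2 + y ^ 2) α hr
  set r := x ^ 2 + y ^ 2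
  have hmul : α / 2 * r ^ (α / 2 - 1) * (2 * y) / (r ^ (α / 2)) ^ 2
      = α * r ^ (-(α / 2) - 1) * y := by
    have h' : α / 2 * r ^ (α / 2 - 1) * (2 * y) / (r ^ (α / 2)) ^ 2
        = (α / 2 * r ^ (α / 2 - 1) * (2 * 1) / (r ^ (α / 2)) ^ 2) * y := by ring
    rw [h', key]
  rw [neg_div, hmul]
  ring

theorem critical_points_of_V (α : ℝ) (hα : 0 < α) (x y : ℝ) (h : (x, y) ≠ (0, 0)) :
    (Vx α x y = 0 ∧ Vy α x y = 0) ↔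
      ((x, y) = (α ^ (1 / (α + 2)), 0) ∨ (x, y) = (-(α ^ (1 / (α + 2))), 0)) := by
  have hα2 : (0:ℝ) < α + 2 := by linarith
  have hr : 0 < x ^ 2 + y ^ 2 := by
    rcases eq_or_ne x 0 with hx | hx
    · rcases eq_or_ne y 0 with hy | hy
      · exact absurd (by simp [hx, hy]) h
      · positivity
    · positivity
  set c := α ^ (1 / (α + 2)) with hc
  have hcpos : 0 < c := Real.rpow_pos_of_pos hα _
  have hcpow : c ^ (α + 2) = α := by
    rw [hc, one_div, Real.rpow_inv_rpow hα.le (by linarith : α + 2 ≠ 0)]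
  set q := (x ^ 2 + y ^ 2) ^ (-(α / 2) - 1) with hq
  have hqpos : 0 < q := Real.rpow_pos_of_pos hr _
  have hVxval : Vx α x y = (α + 2) * x * (α * q - 1) := (hVx α x y hr).deriv
  have hVyval : Vy α x y = (α + 2) * y * (α * q) := (hVy α x y hr).deriv
  -- key: for any z ≠ 0, (z^2)^(α/2+1) = |z|^(α+2)
  have habs : ∀ z : ℝ, ((z ^ 2 : ℝ)) ^ (α / 2 + 1) = |z| ^ (α + 2) := by
    intro z
    rw [← sq_abs z, ← Real.rpow_natCast |z| 2, ← Real.rpow_mul (abs_nonneg z)]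
    norm_num
    ring_nf
  constructor
  · rintro ⟨h1, h2⟩
    rw [hVyval] at h2
    have hy : y = 0 := by
      rcases mul_eq_zero.1 h2 with h' | h'
      · rcases mul_eq_zero.1 h' with h'' | h''
        · linarith
        · exact h''
      · exact absurd h' (by positivity)
    subst hy
    have hx : x ≠ 0 := by
      intro hx0
      exact h (by simp [hx0])
    rw [hVxval] at h1
    have hql : α * q = 1 := by
      rcases mul_eq_zero.1 h1 with h' | h'
      · rcases mul_eq_zero.1 h' with h'' | h''
        · linarith
        · exact absurd h'' hx
      · linarith
    -- q = ((x^2)^(α/2+1))⁻¹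
    have hx2 : (0:ℝ) < x ^ 2 := by positivity
    have hqinv : q = ((x ^ 2) ^ (α / 2 + 1))⁻¹ := by
      rw [hq, ← Real.rpow_neg hx2.le]
      norm_num
      ring_nf
    have hbig : (0:ℝ) < (x ^ 2) ^ (α / 2 + 1) := Real.rpow_pos_of_pos hx2 _
    have hαeq : α = (x ^ 2) ^ (α / 2 + 1) := by
      rw [hqinv, ← div_eq_mul_inv, div_eq_one_iff_eq hbig.ne'] at hql
      exact hql
    rw [habs x] at hαeq
    have habseq : |x| = c := by
      have := congrArg (fun t : ℝ => t ^ (α + 2)⁻¹) hαeq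
      simpa [Real.rpow_rpow_inv (abs_nonneg x) (by linarith : α + 2 ≠ 0), hc, one_div]
        using this.symm
    rcases abs_eq hcpos.le |>.1 habseq with h' | h'
    · left; simp [h']
    · right; simp [h']
  · intro hcase
    have hxy : (x = c ∧ y = 0) ∨ (x = -c ∧ y = 0) := by
      rcases hcase with h' | h' <;> [left; right] <;>
        exact ⟨(Prod.mk.injEq .. ▸ h').1, (Prod.mk.injEq .. ▸ h').2⟩
    have hx2c : x ^ 2 = c ^ 2 := by rcases hxy with ⟨h', _⟩ | ⟨h', _⟩ <;> rw [h'] <;> ring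
    have hy0 : y = 0 := by rcases hxy with ⟨_, h'⟩ | ⟨_, h'⟩ <;> exact h'
    have hql : α * q = 1 := by
      have hc2 : (0:ℝ) < c ^ 2 := by positivity
      have h1 : q = ((c ^ 2) ^ (α / 2 + 1))⁻¹ := by
        rw [hq, hy0, hx2c, ← Real.rpow_neg hc2.le]
        norm_num
        ring_nf
      have h2 : (c ^ 2 : ℝ) ^ (α / 2 + 1) = α := by rw [habs c, abs_of_pos hcpos, hcpow]
      rw [h1, h2]
      field_simp
    constructor
    · rw [hVxval, hql]; ring
    · rw [hVyval, hy0]; ring
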